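/- Let A be the graded-commutative ring Λ[x_{ij}]/(Arnold relations) with odd generators x_{ij} (1 ≤ i < j ≤ n), and let Δ be the derivation with Δ(x_{ij}) = 1. Set y_{ij} := x_{ij} - x_{12} for {i,j} ≠ {1,2}, and let Y ⊆ A be the subalgebra generated by the y_{ij}. Then A = Y ⊕ Y·x_{12} as graded abelian groups, i.e., A is a free module over the exterior algebra Λ[x_{12}] with basis the subalgebra Y. -/

import Mathlib

open ExteriorAlgebra

/-- Unordered pairs of distinct indices in `Fin n`, indexing the generators `x_{ij}`
(this builds in the relation `x_{ij} = x_{ji}`). -/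
abbrev ConfPair (n : ℕ) := {p : Sym2 (Fin n) // ¬ p.IsDiag}

/-- The generator `x_{ij}` of the exterior algebra over `ℤ` on the free module with
basis the unordered pairs `{i,j}`, `i ≠ j` (it is `0` when `i = j`). -/
noncomputable def exGen (n : ℕ) (i j : Fin n) :
    ExteriorAlgebra ℤ (ConfPair n →₀ ℤ) :=
  if h : i = j then 0
  else ExteriorAlgebra.ι ℤ (Finsupp.single ⟨s(i, j), by simpa using h⟩ 1)

/-- The Arnold relations `x_{ij} x_{jk} + x_{jk} x_{ki} + x_{ki} x_{ij} = 0` for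
pairwise distinct `i, j, k`. -/
inductive ArnoldRel (n : ℕ) :
    ExteriorAlgebra ℤ (ConfPair n →₀ ℤ) → ExteriorAlgebra ℤ (ConfPair n →₀ ℤ) → Prop
  | arnold (i j k : Fin n) (hij : i ≠ j) (hjk : j ≠ k) (hki : k ≠ i) :
      ArnoldRel n
        (exGen n i j * exGen n j k + exGen n j k * exGen n k i + exGen n k i * exGen n i j) 0

/-- The Arnold algebra `A = Λ[x_{ij} : 1 ≤ i ≠ j ≤ n] / (x_{ij} = x_{ji}, Arnold relations)`,
the cohomology ring of `Conf_n(ℂ^d)` (with generators in degree `2d-1`). -/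
abbrev ArnoldAlgebra (n : ℕ) := RingQuot (ArnoldRel n)

/-- The class `x_{ij}` in the Arnold algebra. -/
noncomputable def xcl (n : ℕ) (i j : Fin n) : ArnoldAlgebra n :=
  RingQuot.mkAlgHom ℤ (ArnoldRel n) (exGen n i j)

/-- The `ℤ`-submodule of the Arnold algebra spanned by the generators `x_{ij}`; its `m`-th
power is the degree `m(2d-1)` homogeneous part. -/
noncomputable def xSpan (n : ℕ) : Submodule ℤ (ArnoldAlgebra n) :=
  Submodule.span ℤ {a | ∃ i j, i ≠ j ∧ a = xcl n i j}


/-- The subalgebra `Y` of the Arnold algebra generated by the elements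
`y_{ij} = x_{ij} - x_{12}` for `{i,j} ≠ {1,2}` (indices `1, 2` are realized as
`0, 1 : Fin n`). -/
noncomputable def Ysub (n : ℕ) (hn : 1 < n) : Subring (ArnoldAlgebra n) :=
  Subring.closure {a | ∃ i j : Fin n, i ≠ j ∧
    s(i, j) ≠ s((⟨0, by omega⟩ : Fin n), ⟨1, hn⟩) ∧
    a = xcl n i j - xcl n ⟨0, by omega⟩ ⟨1, hn⟩}

namespace ArnoldAux

variable {n : ℕ}

lemma exGen_eq_of_sym2_eq {i j k l : Fin n} (hij : i ≠ j) (hkl : k ≠ l)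
    (h : s(i, j) = s(k, l)) : exGen n i j = exGen n k l := by
  rw [exGen, exGen, dif_neg hij, dif_neg hkl]
  congr 1
  exact congrArg₂ _ (Subtype.ext h) rfl

lemma exGen_symm (i j : Fin n) : exGen n i j = exGen n j i := by
  rcases eq_or_ne i j with h | h
  · rw [h]
  · exact exGen_eq_of_sym2_eq h h.symm (Sym2.eq_swap)

lemma exGen_sq (i j : Fin n) : exGen n i j * exGen n i j = 0 := by
  rw [exGen]
  split
  · simp
  · exact ExteriorAlgebra.ι_sq_zero _

lemma exGen_anticomm (i j k l : Fin n) :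
    exGen n i j * exGen n k l + exGen n k l * exGen n i j = 0 := by
  rw [exGen, exGen]
  split <;> split <;> simp [ExteriorAlgebra.ι_add_mul_swap]

lemma xcl_def (i j : Fin n) :
    xcl n i j = RingQuot.mkAlgHom ℤ (ArnoldRel n) (exGen n i j) := rfl

lemma xcl_eq_of_sym2_eq {i j k l : Fin n} (hij : i ≠ j) (hkl : k ≠ l)
    (h : s(i, j) = s(k, l)) : xcl n i j = xcl n k l := by
  rw [xcl_def, xcl_def, exGen_eq_of_sym2_eq hij hkl h]

lemma xcl_sq (i j : Fin n) : xcl n i j * xcl n i j = 0 := by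
  rw [xcl_def, ← map_mul, exGen_sq, map_zero]

lemma xcl_anticomm (i j k l : Fin n) :
    xcl n i j * xcl n k l + xcl n k l * xcl n i j = 0 := by
  rw [xcl_def, xcl_def, ← map_mul, ← map_mul, ← map_add, exGen_anticomm, map_zero]

lemma xcl_arnold {i j k : Fin n} (hij : i ≠ j) (hjk : j ≠ k) (hki : k ≠ i) :
    xcl n i j * xcl n j k + xcl n j k * xcl n k i + xcl n k i * xcl n i j = 0 := by
  have := RingQuot.mkAlgHom_rel ℤ (ArnoldRel.arnold i j k hij hjk hki)
  simpa [xcl_def, map_add, map_mul] using this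

/-- The Arnold algebra is generated as a ring by the classes `xcl n i j`. -/
lemma mem_closure_xcl (a : ArnoldAlgebra n) :
    a ∈ Subring.closure {a : ArnoldAlgebra n | ∃ i j : Fin n, i ≠ j ∧ a = xcl n i j} := by
  obtain ⟨b, rfl⟩ := RingQuot.mkAlgHom_surjective ℤ (ArnoldRel n) a
  induction b using ExteriorAlgebra.induction with
  | algebraMap r =>
      rw [AlgHom.commutes, eq_intCast]
      exact intCast_mem _ r
  | mul a b ha hb => rw [map_mul]; exact mul_mem ha hb
  | add a b ha hb => rw [map_add]; exact add_mem ha hb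
  | ι m =>
      induction m using Finsupp.induction with
      | zero => simpa using zero_mem _
      | single_add p c f _ _ hf =>
          rw [map_add, map_add]
          refine add_mem ?_ hf
          obtain ⟨q, hq⟩ := p
          induction q using Sym2.ind with
          | _ i j =>
            have hij : i ≠ j := by simpa using hq
            have : (Finsupp.single (⟨s(i, j), hq⟩ : ConfPair n) c)
                = c • Finsupp.single (⟨s(i, j), hq⟩ : ConfPair n) (1 : ℤ) := by
              rw [Finsupp.smul_single, smul_eq_mul, mul_one]
            rw [this, map_smul, map_smul]
            refine zsmul_mem (Subring.subset_closure ?_) c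
            exact ⟨i, j, hij, by rw [xcl_def, exGen, dif_neg hij]⟩

noncomputable def uMap (n : ℕ) : (ConfPair n →₀ ℤ) →ₗ[ℤ] ArnoldAlgebra n :=
  (RingQuot.mkAlgHom ℤ (ArnoldRel n)).toLinearMap ∘ₗ ExteriorAlgebra.ι ℤ

noncomputable def coefZ (n : ℕ) : (ConfPair n →₀ ℤ) →ₗ[ℤ] ℤ :=
  Finsupp.linearCombination ℤ (fun _ => (1 : ℤ))

lemma uMap_sq (m : ConfPair n →₀ ℤ) : uMap n m * uMap n m = 0 := by
  change RingQuot.mkAlgHom ℤ (ArnoldRel n) (ExteriorAlgebra.ι ℤ m) *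
    RingQuot.mkAlgHom ℤ (ArnoldRel n) (ExteriorAlgebra.ι ℤ m) = 0
  rw [← map_mul, ExteriorAlgebra.ι_sq_zero, map_zero]

noncomputable def entMap (n : ℕ) :
    (ConfPair n →₀ ℤ) →ₗ[ℤ] Matrix (Fin 2) (Fin 2) (ArnoldAlgebra n) where
  toFun m := !![-(uMap n m), coefZ n m • 1; 0, uMap n m]
  map_add' a b := by
    ext i j
    fin_cases i <;> fin_cases j <;>
      (simp [Matrix.add_apply, map_add, neg_add, add_smul]; try abel)
  map_smul' c a := by
    ext i j
    fin_cases i <;> fin_cases j <;>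
      simp [Matrix.smul_apply, map_smul, mul_smul, smul_eq_mul]

lemma entMap_apply (m : ConfPair n →₀ ℤ) :
    entMap n m = !![-(uMap n m), coefZ n m • 1; 0, uMap n m] := rfl

lemma entMap_sq (m : ConfPair n →₀ ℤ) : entMap n m * entMap n m = 0 := by
  rw [entMap_apply, Matrix.mul_fin_two]
  ext i j
  fin_cases i <;> fin_cases j <;>
    simp [uMap_sq, mul_smul_comm, smul_mul_assoc, Int.cast_comm, neg_add_cancel]

noncomputable def LExt (n : ℕ) :
    ExteriorAlgebra ℤ (ConfPair n →₀ ℤ) →ₐ[ℤ] Matrix (Fin 2) (Fin 2) (ArnoldAlgebra n) :=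
  ExteriorAlgebra.lift ℤ ⟨entMap n, fun m => entMap_sq m⟩

lemma LExt_exGen {i j : Fin n} (hij : i ≠ j) :
    LExt n (exGen n i j) = !![-(xcl n i j), 1; 0, xcl n i j] := by
  rw [exGen, dif_neg hij, LExt]
  erw [ExteriorAlgebra.lift_ι_apply, entMap_apply]
  have h1 : uMap n (Finsupp.single (⟨s(i, j), by simpa using hij⟩ : ConfPair n) 1)
      = xcl n i j := by
    rw [xcl_def, exGen, dif_neg hij]; rfl
  have h2 : coefZ n (Finsupp.single (⟨s(i, j), by simpa using hij⟩ : ConfPair n) 1)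
      = 1 := by
    rw [coefZ, Finsupp.linearCombination_single, smul_eq_mul, mul_one]
  rw [h1, h2, one_smul]

lemma LExt_rel : ∀ ⦃x y⦄, ArnoldRel n x y → LExt n x = LExt n y := by
  rintro _ _ ⟨i, j, k, hij, hjk, hki⟩
  have harnold := xcl_arnold hij hjk hki
  rw [map_add, map_add, map_mul, map_mul, map_mul, LExt_exGen hij, LExt_exGen hjk,
    LExt_exGen hki, map_zero]
  ext r c
  fin_cases r <;> fin_cases c <;>
    simp [Matrix.mul_fin_two, Matrix.add_apply, ← add_assoc] <;>
    exact harnold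

noncomputable def Lmap (n : ℕ) :
    ArnoldAlgebra n →ₐ[ℤ] Matrix (Fin 2) (Fin 2) (ArnoldAlgebra n) :=
  RingQuot.liftAlgHom ℤ ⟨LExt n, LExt_rel⟩

lemma Lmap_xcl {i j : Fin n} (hij : i ≠ j) :
    Lmap n (xcl n i j) = !![-(xcl n i j), 1; 0, xcl n i j] := by
  rw [xcl_def, Lmap, RingQuot.liftAlgHom_mkAlgHom_apply, LExt_exGen hij, ← xcl_def]

lemma Lmap_lower (a : ArnoldAlgebra n) : Lmap n a 1 0 = 0 := by
  refine Subring.closure_induction ?_ ?_ ?_ ?_ ?_ ?_ (mem_closure_xcl a)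
  · rintro _ ⟨i, j, hij, rfl⟩
    rw [Lmap_xcl hij]
    simp
  · simp
  · simp [Matrix.one_apply]
  · intro x y _ _ px py
    rw [map_add, Matrix.add_apply, px, py, add_zero]
  · intro x _ px
    rw [map_neg, Matrix.neg_apply, px, neg_zero]
  · intro x y _ _ px py
    rw [map_mul, Matrix.mul_apply, Fin.sum_univ_two, px, py, zero_mul, mul_zero, add_zero]

lemma Lmap_invol (a : ArnoldAlgebra n) : Lmap n (Lmap n a 0 0) 0 0 = a := by
  refine Subring.closure_induction ?_ ?_ ?_ ?_ ?_ ?_ (mem_closure_xcl a)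
  · rintro _ ⟨i, j, hij, rfl⟩
    rw [Lmap_xcl hij]
    have : (!![-(xcl n i j), 1; 0, xcl n i j] : Matrix (Fin 2) (Fin 2) _) 0 0
        = -(xcl n i j) := by simp
    rw [this, map_neg, Matrix.neg_apply, Lmap_xcl hij]
    simp
  · simp
  · simp [Matrix.one_apply]
  · intro x y _ _ px py
    rw [map_add, Matrix.add_apply, map_add, Matrix.add_apply, px, py]
  · intro x _ px
    rw [map_neg, Matrix.neg_apply, map_neg, Matrix.neg_apply, px]
  · intro x y _ _ px py
    rw [map_mul, Matrix.mul_apply, Fin.sum_univ_two, Lmap_lower, mul_zero, add_zero,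
      map_mul, Matrix.mul_apply, Fin.sum_univ_two, Lmap_lower, mul_zero, add_zero, px, py]

lemma sigma_eq_zero {a : ArnoldAlgebra n} (h : Lmap n a 0 0 = 0) : a = 0 := by
  rw [← Lmap_invol a, h, map_zero, Matrix.zero_apply]

lemma Lmap_Y_upper {hn : 1 < n} {y : ArnoldAlgebra n} (hy : y ∈ Ysub n hn) :
    Lmap n y 0 1 = 0 := by
  refine Subring.closure_induction ?_ ?_ ?_ ?_ ?_ ?_ hy
  · rintro _ ⟨i, j, hij, hne, rfl⟩
    have h01 : (⟨0, by omega⟩ : Fin n) ≠ ⟨1, hn⟩ := by simp [Fin.ext_iff]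
    rw [map_sub, Matrix.sub_apply, Lmap_xcl hij, Lmap_xcl h01]
    simp
  · simp
  · simp [Matrix.one_apply]
  · intro x y _ _ px py
    rw [map_add, Matrix.add_apply, px, py, add_zero]
  · intro x _ px
    rw [map_neg, Matrix.neg_apply, px, neg_zero]
  · intro x y _ _ px py
    rw [map_mul, Matrix.mul_apply, Fin.sum_univ_two, px, py, zero_mul, mul_zero, add_zero]

lemma conj_x {hn : 1 < n} {y : ArnoldAlgebra n} (hy : y ∈ Ysub n hn) :
    ∃ z ∈ Ysub n hn,
      xcl n ⟨0, by omega⟩ ⟨1, hn⟩ * y = z * xcl n ⟨0, by omega⟩ ⟨1, hn⟩ := by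
  set x : ArnoldAlgebra n := xcl n ⟨0, by omega⟩ ⟨1, hn⟩ with hxdef
  have hxx : x * x = 0 := xcl_sq _ _
  refine Subring.closure_induction ?_ ?_ ?_ ?_ ?_ ?_ hy
  · rintro _ ⟨i, j, hij, hne, rfl⟩
    refine ⟨-(xcl n i j - x), neg_mem (Subring.subset_closure ⟨i, j, hij, hne, rfl⟩), ?_⟩
    have hanti : x * xcl n i j = -(xcl n i j * x) :=
      eq_neg_of_add_eq_zero_left (xcl_anticomm _ _ i j)
    have h1 : x * (xcl n i j - x) = x * xcl n i j := by rw [mul_sub, hxx, sub_zero]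
    have h2 : (-(xcl n i j - x)) * x = -(xcl n i j * x) := by
      rw [neg_sub, sub_mul, hxx, zero_sub]
    rw [h1, h2, hanti]
  · exact ⟨0, zero_mem _, by simp⟩
  · exact ⟨1, one_mem _, by simp⟩
  · rintro a b _ _ ⟨za, hza, ea⟩ ⟨zb, hzb, eb⟩
    exact ⟨za + zb, add_mem hza hzb, by rw [mul_add, ea, eb, add_mul]⟩
  · rintro a _ ⟨za, hza, ea⟩
    exact ⟨-za, neg_mem hza, by rw [mul_neg, ea, neg_mul]⟩
  · rintro a b _ _ ⟨za, hza, ea⟩ ⟨zb, hzb, eb⟩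
    exact ⟨za * zb, mul_mem hza hzb,
      by rw [← mul_assoc, ea, mul_assoc, eb, ← mul_assoc]⟩

lemma exists_decomp (hn : 1 < n) (a : ArnoldAlgebra n) :
    ∃ y y' : ArnoldAlgebra n, y ∈ Ysub n hn ∧ y' ∈ Ysub n hn ∧
      a = y + y' * xcl n ⟨0, by omega⟩ ⟨1, hn⟩ := by
  set x : ArnoldAlgebra n := xcl n ⟨0, by omega⟩ ⟨1, hn⟩ with hxdef
  have hxx : x * x = 0 := xcl_sq _ _
  have h01 : (⟨0, by omega⟩ : Fin n) ≠ ⟨1, hn⟩ := by simp [Fin.ext_iff]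
  refine Subring.closure_induction ?_ ?_ ?_ ?_ ?_ ?_ (mem_closure_xcl a)
  · rintro _ ⟨i, j, hij, rfl⟩
    by_cases hs : s(i, j) = s((⟨0, by omega⟩ : Fin n), ⟨1, hn⟩)
    · exact ⟨0, 1, zero_mem _, one_mem _,
        by rw [xcl_eq_of_sym2_eq hij h01 hs]; simp [hxdef]⟩
    · exact ⟨xcl n i j - x, 1, Subring.subset_closure ⟨i, j, hij, hs, rfl⟩, one_mem _,
        by rw [one_mul, sub_add_cancel]⟩
  · exact ⟨0, 0, zero_mem _, zero_mem _, by simp⟩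
  · exact ⟨1, 0, one_mem _, zero_mem _, by simp⟩
  · rintro a b _ _ ⟨y₁, y₁', h₁, h₁', e₁⟩ ⟨y₂, y₂', h₂, h₂', e₂⟩
    exact ⟨y₁ + y₂, y₁' + y₂', add_mem h₁ h₂, add_mem h₁' h₂',
      by rw [e₁, e₂]; noncomm_ring⟩
  · rintro a _ ⟨y₁, y₁', h₁, h₁', e₁⟩
    exact ⟨-y₁, -y₁', neg_mem h₁, neg_mem h₁', by rw [e₁]; noncomm_ring⟩
  · rintro a b _ _ ⟨y₁, y₁', h₁, h₁', e₁⟩ ⟨y₂, y₂', h₂, h₂', e₂⟩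
    obtain ⟨z₂, hz₂, ez₂⟩ := conj_x h₂
    obtain ⟨z₂', hz₂', ez₂'⟩ := conj_x h₂'
    refine ⟨y₁ * y₂, y₁ * y₂' + y₁' * z₂, mul_mem h₁ h₂,
      add_mem (mul_mem h₁ h₂') (mul_mem h₁' hz₂), ?_⟩
    have e1 : x * (y₂' * x) = 0 := by rw [← mul_assoc, ez₂', mul_assoc, hxx, mul_zero]
    have expand : (y₁ + y₁' * x) * (y₂ + y₂' * x)
        = y₁ * y₂ + y₁ * (y₂' * x) + (y₁' * (x * y₂) + y₁' * (x * (y₂' * x))) := by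
      noncomm_ring
    rw [e₁, e₂, expand, e1, mul_zero, ez₂]
    noncomm_ring

end ArnoldAux

open ArnoldAux in
/-- With `A` the Arnold algebra, `y_{ij} := x_{ij} - x_{12}` and `Y ⊆ A`
the subalgebra generated by the `y_{ij}` (`{i,j} ≠ {1,2}`), we have `A = Y ⊕ Y·x_{12}`
as (graded) abelian groups; i.e. `A` is a free module over `Λ[x_{12}]` with basis `Y`:
every element is uniquely `y + y'·x_{12}` with `y, y' ∈ Y`. -/
theorem arnold_free_over_x12 (n : ℕ) (hn : 1 < n) :
    (∀ a : ArnoldAlgebra n, ∃ y y' : ArnoldAlgebra n, y ∈ Ysub n hn ∧ y' ∈ Ysub n hn ∧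
        a = y + y' * xcl n ⟨0, by omega⟩ ⟨1, hn⟩) ∧
    (∀ y y' : ArnoldAlgebra n, y ∈ Ysub n hn → y' ∈ Ysub n hn →
        y + y' * xcl n ⟨0, by omega⟩ ⟨1, hn⟩ = 0 → y = 0 ∧ y' = 0) := by
  constructor
  · exact fun a => ArnoldAux.exists_decomp hn a
  · intro y y' hy hy' h
    have h01 : (⟨0, by omega⟩ : Fin n) ≠ ⟨1, hn⟩ := by simp [Fin.ext_iff]
    have key : Lmap n (y + y' * xcl n ⟨0, by omega⟩ ⟨1, hn⟩) 0 1 = 0 := by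
      rw [h, map_zero, Matrix.zero_apply]
    rw [map_add, Matrix.add_apply, ArnoldAux.Lmap_Y_upper hy, zero_add, map_mul,
      Matrix.mul_apply, Fin.sum_univ_two, ArnoldAux.Lmap_Y_upper hy', zero_mul, add_zero,
      ArnoldAux.Lmap_xcl h01] at key
    simp at key
    have hy'0 : y' = 0 := ArnoldAux.sigma_eq_zero key
    refine ⟨?_, hy'0⟩
    rw [hy'0, zero_mul, add_zero] at h
    exact h
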